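/- Let X be a vertex (with index set also denoted X), let ρ ∈ ℂ with |ρ| = 1 and ρ ∉ ℝ, and let C^ρ_X = {X + ρ·Σ_{j∈X} a_j e_{X∖{j}} : a_j ∈ ℝ, a_j ≥ 0 for all j ∈ X} ⊆ ℂ^k, where the real points X and e_{X∖{j}} are regarded as points of ℂ^k. Then for every index l ∉ X, the set C^ρ_X is disjoint from the complexified hyperplane ℂH_l = {z ∈ ℂ^k : F_l(z) = 0}, where F_l is the ℂ-affine extension of f_l to ℂ^k. -/

import Mathlib

open Set MeasureTheory Filter
open scoped Classical Real

noncomputable section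

namespace HypArr

variable {k N : ℕ}

/-- The hyperplane `H j = f j ⁻¹ (0)` of the `j`-th affine form. -/
def Hyp (f : Fin N → ((Fin k → ℝ) →ᵃ[ℝ] ℝ)) (j : Fin N) : Set (Fin k → ℝ) :=
  {x | f j x = 0}

/-- The complement `ℝ^k ∖ (H 1 ∪ ⋯ ∪ H N)` of the union of all the hyperplanes. -/
def HypCompl (f : Fin N → ((Fin k → ℝ) →ᵃ[ℝ] ℝ)) : Set (Fin k → ℝ) :=
  {x | ∀ j, f j x ≠ 0}

/-- `Δ` is an arrangement domain: a connected component of `ℝ^k ∖ (H 1 ∪ ⋯ ∪ H N)`. -/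
def IsDomain (f : Fin N → ((Fin k → ℝ) →ᵃ[ℝ] ℝ)) (Δ : Set (Fin k → ℝ)) : Prop :=
  ∃ x ∈ HypCompl f, Δ = connectedComponentIn (HypCompl f) x

/-- The hyperplanes `H 1, …, H N` are in generic position in `ℝ^k`: they are pairwise
distinct, any `k` of them intersect in exactly one point, and any `k+1` of them have
empty intersection. -/
def Generic (f : Fin N → ((Fin k → ℝ) →ᵃ[ℝ] ℝ)) : Prop :=
  (∀ i j : Fin N, i ≠ j → Hyp f i ≠ Hyp f j) ∧
  (∀ S : Finset (Fin N), S.card = k → ∃! x : Fin k → ℝ, ∀ j ∈ S, f j x = 0) ∧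
  (∀ S : Finset (Fin N), S.card = k + 1 → ¬ ∃ x : Fin k → ℝ, ∀ j ∈ S, f j x = 0)

/-- `X` is a vertex of the arrangement. -/
def IsVertex (f : Fin N → ((Fin k → ℝ) →ᵃ[ℝ] ℝ)) (X : Fin k → ℝ) : Prop :=
  ∃ S : Finset (Fin N), S.card = k ∧ ∀ j ∈ S, f j X = 0

/-- `X` is the vertex of the arrangement with index set `S`. -/
def IsVertexOf (f : Fin N → ((Fin k → ℝ) →ᵃ[ℝ] ℝ)) (S : Finset (Fin N))
    (X : Fin k → ℝ) : Prop :=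
  S.card = k ∧ ∀ j ∈ S, f j X = 0

/-- The linear form `f0` is in general position with respect to the arrangement:
it takes pairwise distinct values at the vertices and is nonconstant on each
line `L_U = ∩_{j ∈ U} H j` for `U` of cardinality `k - 1`. -/
def GenericLin (f : Fin N → ((Fin k → ℝ) →ᵃ[ℝ] ℝ)) (f0 : (Fin k → ℝ) →ₗ[ℝ] ℝ) : Prop :=
  (∀ X Y : Fin k → ℝ, IsVertex f X → IsVertex f Y → X ≠ Y → f0 X ≠ f0 Y) ∧
  ∀ U : Finset (Fin N), U.card = k - 1 →
    ∃ x y : Fin k → ℝ, (∀ j ∈ U, f j x = 0) ∧ (∀ j ∈ U, f j y = 0) ∧ f0 x ≠ f0 y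

/-- `C` is a connected component of `ℝ^k ∖ ⋃_{j ∈ S} H j`. -/
def IsConeComp (f : Fin N → ((Fin k → ℝ) →ᵃ[ℝ] ℝ)) (S : Finset (Fin N))
    (C : Set (Fin k → ℝ)) : Prop :=
  ∃ y, (∀ j ∈ S, f j y ≠ 0) ∧ C = connectedComponentIn {z | ∀ j ∈ S, f j z ≠ 0} y

/-- `C` is the cone `C⁺_X` of the vertex `X` with index set `S`: the unique connected
component of `ℝ^k ∖ ⋃_{j ∈ S} H j` on which `f0 - f0 X` is everywhere positive. -/
def IsPosCone (f : Fin N → ((Fin k → ℝ) →ᵃ[ℝ] ℝ)) (f0 : (Fin k → ℝ) →ₗ[ℝ] ℝ)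
    (S : Finset (Fin N)) (X : Fin k → ℝ) (C : Set (Fin k → ℝ)) : Prop :=
  IsConeComp f S C ∧ ∀ y ∈ C, f0 X < f0 y

/-- `C` is the cone `C⁻_X` of the vertex `X` with index set `S`: the unique connected
component of `ℝ^k ∖ ⋃_{j ∈ S} H j` on which `f0 - f0 X` is everywhere negative. -/
def IsNegCone (f : Fin N → ((Fin k → ℝ) →ᵃ[ℝ] ℝ)) (f0 : (Fin k → ℝ) →ₗ[ℝ] ℝ)
    (S : Finset (Fin N)) (X : Fin k → ℝ) (C : Set (Fin k → ℝ)) : Prop :=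
  IsConeComp f S C ∧ ∀ y ∈ C, f0 y < f0 X

/-- `Δ` is the domain `Δ_X` of the vertex `X`: the unique arrangement domain whose
closure contains `X` and on which `f0 - f0 X > 0`. -/
def IsDomOf (f : Fin N → ((Fin k → ℝ) →ᵃ[ℝ] ℝ)) (f0 : (Fin k → ℝ) →ₗ[ℝ] ℝ)
    (X : Fin k → ℝ) (Δ : Set (Fin k → ℝ)) : Prop :=
  IsDomain f Δ ∧ X ∈ closure Δ ∧ ∀ y ∈ Δ, f0 X < f0 y

/-- `Δ` is the domain `Δ⁻_X` of the vertex `X`: the unique arrangement domain whose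
closure contains `X` and on which `f0 - f0 X < 0`. -/
def IsNegDomOf (f : Fin N → ((Fin k → ℝ) →ᵃ[ℝ] ℝ)) (f0 : (Fin k → ℝ) →ₗ[ℝ] ℝ)
    (X : Fin k → ℝ) (Δ : Set (Fin k → ℝ)) : Prop :=
  IsDomain f Δ ∧ X ∈ closure Δ ∧ ∀ y ∈ Δ, f0 y < f0 X

/-- `Δ` belongs to `𝒟⁺`: it is an arrangement domain on which `f0` is bounded
from below. -/
def MemDplus (f : Fin N → ((Fin k → ℝ) →ᵃ[ℝ] ℝ)) (f0 : (Fin k → ℝ) →ₗ[ℝ] ℝ)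
    (Δ : Set (Fin k → ℝ)) : Prop :=
  IsDomain f Δ ∧ BddBelow (f0 '' Δ)

/-- `Δ` belongs to `𝒟⁻`: it is an arrangement domain on which `f0` is bounded
from above. -/
def MemDminus (f : Fin N → ((Fin k → ℝ) →ᵃ[ℝ] ℝ)) (f0 : (Fin k → ℝ) →ₗ[ℝ] ℝ)
    (Δ : Set (Fin k → ℝ)) : Prop :=
  IsDomain f Δ ∧ BddAbove (f0 '' Δ)

/-- The set `W` (a hyperplane) separates `S` from `T`: they lie in different connected
components of the complement of `W`. -/
def Separates {α : Type*} [TopologicalSpace α] (W S T : Set α) : Prop :=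
  ∃ x ∈ S, ∃ y ∈ T, S ⊆ connectedComponentIn Wᶜ x ∧ T ⊆ connectedComponentIn Wᶜ y ∧
    connectedComponentIn Wᶜ x ≠ connectedComponentIn Wᶜ y

/-- The index set of `ℋ(Δ, Δ')`, the set of hyperplanes separating `Δ` from `Δ'`. -/
def SepSet (f : Fin N → ((Fin k → ℝ) →ᵃ[ℝ] ℝ)) (Δ Δ' : Set (Fin k → ℝ)) :
    Finset (Fin N) :=
  Finset.univ.filter fun j => Separates (Hyp f j) Δ Δ'

/-- for a vertex `X`, `ρ ∈ ℂ` with `|ρ| = 1`, `ρ ∉ ℝ`, the complex cone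
`C^ρ_X = {X + ρ • ∑_{j ∈ X} a j • e_{X∖{j}} : a j ≥ 0} ⊆ ℂ^k` is disjoint from every
complexified hyperplane `ℂH l` with `l ∉ X`. -/
theorem stmt_12 {k N : ℕ} (hk : 1 ≤ k) (hkN : k ≤ N)
    (f : Fin N → ((Fin k → ℝ) →ᵃ[ℝ] ℝ)) (hf : Generic f)
    (f0 : (Fin k → ℝ) →ₗ[ℝ] ℝ) (hf0 : GenericLin f f0)
    (Sx : Finset (Fin N)) (X : Fin k → ℝ) (hX : IsVertexOf f Sx X)
    (e : Fin N → (Fin k → ℝ))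
    (he : ∀ j ∈ Sx, (∀ i ∈ Sx.erase j, (f i).linear (e j) = 0) ∧ f0 (e j) = 1)
    (ρ : ℂ) (hρ1 : ‖ρ‖ = 1) (hρ2 : ρ.im ≠ 0)
    (F : Fin N → ((Fin k → ℂ) →ᵃ[ℂ] ℂ))
    (hF : ∀ (j : Fin N) (x : Fin k → ℝ), F j (fun i => (x i : ℂ)) = (f j x : ℂ)) :
    ∀ l : Fin N, l ∉ Sx →
      ∀ z : Fin k → ℂ,
        (∃ a : Fin N → ℝ, (∀ j ∈ Sx, 0 ≤ a j) ∧
          z = (fun i => (X i : ℂ)) +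
            ρ • ∑ j ∈ Sx, (a j : ℂ) • (fun i => (e j i : ℂ))) →
        F l z ≠ 0 := by
  intro l hl z hza heq
  obtain ⟨a, _, hz⟩ := hza
  -- `f l X ≠ 0` since `l ∉ Sx` and the hyperplanes are generic
  have hflX : f l X ≠ 0 := by
    intro h0
    have hcard : (insert l Sx).card = k + 1 := by
      rw [Finset.card_insert_of_notMem hl, hX.1]
    refine hf.2.2 _ hcard ⟨X, ?_⟩
    intro j hj
    rcases Finset.mem_insert.mp hj with rfl | hj
    · exact h0
    · exact hX.2 j hj
  -- the linear part of `F l` agrees with that of `f l` on real vectors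
  have hF0 : F l 0 = ((f l 0 : ℝ) : ℂ) := by
    have h := hF l 0
    have : (fun i => (((0 : Fin k → ℝ) i : ℝ) : ℂ)) = (0 : Fin k → ℂ) := by
      funext i; simp
    rwa [this] at h
  have hlin : ∀ x : Fin k → ℝ,
      (F l).linear (fun i => (x i : ℂ)) = (((f l).linear x : ℝ) : ℂ) := by
    intro x
    have h1 : F l (fun i => (x i : ℂ)) =
        (F l).linear (fun i => (x i : ℂ)) + F l 0 := by
      conv_lhs => rw [AffineMap.decomp (F l)]
      rfl
    have h2 : f l x = (f l).linear x + f l 0 := by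
      conv_lhs => rw [AffineMap.decomp (f l)]
      rfl
    have := hF l x
    rw [h1, hF0] at this
    have : (F l).linear (fun i => (x i : ℂ)) = ((f l x : ℝ) : ℂ) - ((f l 0 : ℝ) : ℂ) := by
      linear_combination this
    rw [this, h2]
    push_cast
    ring
  -- compute `F l z`
  set s : ℝ := ∑ j ∈ Sx, a j * (f l).linear (e j) with hs
  have key : F l z = ((f l X : ℝ) : ℂ) + ρ * (s : ℂ) := by
    have hw : z = (ρ • ∑ j ∈ Sx, (a j : ℂ) • (fun i => (e j i : ℂ))) +ᵥ
        (fun i => ((X i : ℝ) : ℂ)) := by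
      rw [hz]; funext i
      simp [add_comm]
    rw [hw, AffineMap.map_vadd, hF l X]
    have hsum : (F l).linear (∑ j ∈ Sx, (a j : ℂ) • (fun i => (e j i : ℂ))) =
        (s : ℂ) := by
      rw [map_sum, hs]
      push_cast
      refine Finset.sum_congr rfl fun j hj => ?_
      rw [_root_.map_smul, hlin (e j)]
      simp [smul_eq_mul]
    rw [_root_.map_smul, hsum]
    simp [smul_eq_mul, add_comm]
  rw [heq] at key
  -- take imaginary part: `ρ.im * s = 0`, hence `s = 0`
  have him := congrArg Complex.im key
  simp [Complex.add_im, Complex.mul_im] at him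
  rcases him with him | him
  · exact hρ2 him
  · -- s = 0, so f l X = 0, contradiction
    rw [him] at key
    simp at key
    exact hflX (by exact_mod_cast key.symm)

end HypArr
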